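/- The operation g ∗ h = g₊ h g₋⁻¹ makes the set of invertible complex n×n matrices into a group: ∗ is associative, the identity matrix is a two-sided identity for ∗, and every element has a two-sided ∗-inverse. -/

import Mathlib

open Matrix

noncomputable section

open Classical

/-- The Iwasawa pair `(g₊, g₋)` of an invertible complex matrix `g`: the unique
pair with `g₊` unitary, `g₋` lower triangular with positive real diagonal entries
and `g = g₊ g₋⁻¹` (junk value `(1,1)` if no such pair exists). -/
noncomputable def iwaPair {n : ℕ} (g : Matrix (Fin n) (Fin n) ℂ) :
    Matrix (Fin n) (Fin n) ℂ × Matrix (Fin n) (Fin n) ℂ :=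
  if h : ∃ p : Matrix (Fin n) (Fin n) ℂ × Matrix (Fin n) (Fin n) ℂ,
      p.1ᴴ * p.1 = 1 ∧ (∀ i j : Fin n, i < j → p.2 i j = 0) ∧
      (∀ i : Fin n, 0 < (p.2 i i).re ∧ (p.2 i i).im = 0) ∧ g = p.1 * p.2⁻¹
  then h.choose else (1, 1)

/-- The dressing dual group multiplication `g ∗ h = g₊ h g₋⁻¹`. -/
noncomputable def dstar {n : ℕ} (g h : Matrix (Fin n) (Fin n) ℂ) :
    Matrix (Fin n) (Fin n) ℂ :=
  (iwaPair g).1 * h * ((iwaPair g).2)⁻¹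

/- ### Auxiliary material -/

section Aux

open scoped ComplexOrder

variable {n : ℕ}

/-- positivity predicate shorthand facts -/
lemma posC_iff {z : ℂ} : (0 < z.re ∧ z.im = 0) ↔ ∃ r : ℝ, 0 < r ∧ z = (r : ℂ) := by
  constructor
  · rintro ⟨h1, h2⟩
    exact ⟨z.re, h1, Complex.ext rfl (by simp [h2])⟩
  · rintro ⟨r, hr, rfl⟩
    simp [hr]

lemma posC_mul {z w : ℂ} (hz : 0 < z.re ∧ z.im = 0) (hw : 0 < w.re ∧ w.im = 0) :
    0 < (z * w).re ∧ (z * w).im = 0 := by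
  obtain ⟨r, hr, rfl⟩ := posC_iff.mp hz
  obtain ⟨s, hs, rfl⟩ := posC_iff.mp hw
  exact posC_iff.mpr ⟨r * s, mul_pos hr hs, by push_cast; ring⟩

lemma posC_inv {z : ℂ} (hz : 0 < z.re ∧ z.im = 0) : 0 < z⁻¹.re ∧ z⁻¹.im = 0 := by
  obtain ⟨r, hr, rfl⟩ := posC_iff.mp hz
  exact posC_iff.mpr ⟨r⁻¹, inv_pos.mpr hr, by push_cast; ring⟩

lemma posC_ne {z : ℂ} (hz : 0 < z.re ∧ z.im = 0) : z ≠ 0 := by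
  rintro rfl; simp at hz

lemma lowerTri_bt {A : Matrix (Fin n) (Fin n) ℂ} (h : ∀ i j : Fin n, i < j → A i j = 0) :
    A.BlockTriangular (OrderDual.toDual : Fin n → (Fin n)ᵒᵈ) := fun i j hij => h i j hij

lemma lower_mul {A B : Matrix (Fin n) (Fin n) ℂ} (hA : ∀ i j : Fin n, i < j → A i j = 0)
    (hB : ∀ i j : Fin n, i < j → B i j = 0) : ∀ i j : Fin n, i < j → (A * B) i j = 0 :=
  fun _ _ hij => (lowerTri_bt hA).mul (lowerTri_bt hB) hij

lemma lower_mul_diag {A B : Matrix (Fin n) (Fin n) ℂ} (hA : ∀ i j : Fin n, i < j → A i j = 0)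
    (hB : ∀ i j : Fin n, i < j → B i j = 0) (i : Fin n) : (A * B) i i = A i i * B i i := by
  rw [mul_apply]
  rw [Finset.sum_eq_single i]
  · intro k _ hk
    rcases lt_or_gt_of_ne hk with h | h
    · rw [hB k i h, mul_zero]
    · rw [hA i k h, zero_mul]
  · simp

lemma lower_det {A : Matrix (Fin n) (Fin n) ℂ} (hA : ∀ i j : Fin n, i < j → A i j = 0) :
    A.det = ∏ i : Fin n, A i i := det_of_lowerTriangular A (lowerTri_bt hA)

lemma lower_isUnit {A : Matrix (Fin n) (Fin n) ℂ} (hA : ∀ i j : Fin n, i < j → A i j = 0)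
    (hd : ∀ i : Fin n, A i i ≠ 0) : IsUnit A := by
  rw [Matrix.isUnit_iff_isUnit_det, lower_det hA]
  exact isUnit_iff_ne_zero.mpr (Finset.prod_ne_zero_iff.mpr fun i _ => hd i)

lemma lower_inv {A : Matrix (Fin n) (Fin n) ℂ} (hA : ∀ i j : Fin n, i < j → A i j = 0)
    (hu : IsUnit A) : ∀ i j : Fin n, i < j → A⁻¹ i j = 0 := by
  letI := hu.invertible
  exact fun i j hij => blockTriangular_inv_of_blockTriangular (lowerTri_bt hA) hij

lemma lower_inv_diag {A : Matrix (Fin n) (Fin n) ℂ} (hA : ∀ i j : Fin n, i < j → A i j = 0)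
    (hu : IsUnit A) (i : Fin n) : A⁻¹ i i = (A i i)⁻¹ := by
  have h1 : (A * A⁻¹) i i = 1 := by
    rw [Matrix.mul_nonsing_inv A ((Matrix.isUnit_iff_isUnit_det A).mp hu)]
    simp [Matrix.one_apply]
  rw [lower_mul_diag hA (lower_inv hA hu)] at h1
  exact eq_inv_of_mul_eq_one_right (by linear_combination h1)

lemma unitary_isUnit {Q : Matrix (Fin n) (Fin n) ℂ} (hQ : Qᴴ * Q = 1) : IsUnit Q := by
  have := congrArg Matrix.det hQ
  rw [Matrix.det_mul, Matrix.det_one] at this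
  exact (Matrix.isUnit_iff_isUnit_det Q).mpr (IsUnit.of_mul_eq_one _ ((mul_comm _ _).trans this))

lemma posDef_conjTranspose_mul_self' {g : Matrix (Fin n) (Fin n) ℂ} (hg : IsUnit g) :
    (gᴴ * g).PosDef := by
  exact PosDef.conjTranspose_mul_self g (Matrix.mulVec_injective_iff_isUnit.mpr hg)

lemma posDef_conj' {S B : Matrix (Fin n) (Fin n) ℂ} (hS : S.PosDef) (hB : IsUnit B) :
    (B * S * Bᴴ).PosDef := by
  exact hS.mul_mul_conjTranspose_same (Matrix.vecMul_injective_iff_isUnit.mpr hB)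

/-- reverse Cholesky decomposition: for invertible `g` there is a lower triangular `L`
with positive real diagonal entries such that `gᴴ g = Lᴴ L`. -/
lemma rev_cholesky {g : Matrix (Fin n) (Fin n) ℂ} (hg : IsUnit g) :
    ∃ L : Matrix (Fin n) (Fin n) ℂ, (∀ i j : Fin n, i < j → L i j = 0) ∧
      (∀ i : Fin n, 0 < (L i i).re ∧ (L i i).im = 0) ∧ gᴴ * g = Lᴴ * L := by
  have hS₀ : (gᴴ * g).PosDef := posDef_conjTranspose_mul_self' hg
  set S₀ := gᴴ * g with hS₀def
  have hS : (S₀⁻¹).PosDef := hS₀.inv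
  haveI : WellFoundedLT (Fin n) := inferInstance
  haveI : LocallyFiniteOrderBot (Fin n) := inferInstance
  set N := LDL.lowerInv hS with hNdef
  have hNlow : ∀ i j : Fin n, i < j → N i j = 0 := fun i j h => LDL.lowerInv_triangular hS h
  have hNu : IsUnit N := by
    obtain ⟨B, hB1, hB2⟩ := LDL.invertibleLowerInv hS
    refine IsUnit.of_mul_eq_one (a := N) B ?_
    ext i j
    have h := congrFun (congrFun hB2 i) j
    rw [h]
  have hNdet : IsUnit N.det := (Matrix.isUnit_iff_isUnit_det N).mp hNu
  have hNHdet : IsUnit (Nᴴ).det := (Matrix.isUnit_iff_isUnit_det _).mp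
    ((Matrix.isUnit_conjTranspose N).mpr hNu)
  have hNii : ∀ i : Fin n, N i i ≠ 0 := by
    have hdet : N.det ≠ 0 := hNdet.ne_zero
    rw [lower_det hNlow] at hdet
    exact fun i => Finset.prod_ne_zero_iff.mp hdet i (Finset.mem_univ i)
  have hD : LDL.diag hS = N * S₀⁻¹ * Nᴴ := LDL.diag_eq_lowerInv_conj hS
  have hdd : LDL.diag hS = diagonal (LDL.diagEntries hS) := by
    unfold LDL.diag
    ext i j
    by_cases hij : i = j <;> simp [Matrix.diagonal_apply, hij]
  have hDpd : (diagonal (LDL.diagEntries hS)).PosDef := by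
    rw [← hdd, hD]
    exact posDef_conj' hS hNu
  have hd : ∀ i, 0 < LDL.diagEntries hS i := Matrix.posDef_diagonal_iff.mp hDpd
  set c : Fin n → ℝ := fun i => Real.sqrt (LDL.diagEntries hS i).re with hcdef
  have hc : ∀ i, 0 < c i := fun i => Real.sqrt_pos.mpr ((Complex.lt_def.mp (hd i)).1)
  have hcne : ∀ i, (c i : ℂ) ≠ 0 := fun i => by exact_mod_cast (hc i).ne'
  have hcsq : ∀ i, (c i : ℂ) * c i = LDL.diagEntries hS i := by
    intro i
    have h1 := (Complex.lt_def.mp (hd i)).1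
    have h2 := (Complex.lt_def.mp (hd i)).2
    rw [← Complex.ofReal_mul, Real.mul_self_sqrt h1.le]
    exact Complex.ext rfl (by simpa using h2)
  set F : Matrix (Fin n) (Fin n) ℂ := diagonal fun i => (c i : ℂ) with hFdef
  set F' : Matrix (Fin n) (Fin n) ℂ := diagonal fun i => ((c i : ℂ))⁻¹ with hF'def
  have hFF : F * F = LDL.diag hS := by
    rw [hFdef, diagonal_mul_diagonal, hdd, funext hcsq]
  have hFF' : (F * F) * (F' * F') = 1 := by
    rw [hFdef, hF'def, diagonal_mul_diagonal, diagonal_mul_diagonal, diagonal_mul_diagonal,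
      ← diagonal_one]
    have : (fun i => (c i : ℂ) * (c i) * ((c i : ℂ)⁻¹ * (c i : ℂ)⁻¹)) = fun _ => (1 : ℂ) := by
      funext i
      rw [mul_mul_mul_comm, mul_inv_cancel₀ (hcne i), one_mul]
    rw [this]
  have hS₀u : IsUnit S₀.det := (Matrix.isUnit_iff_isUnit_det _).mp hS₀.isUnit
  have hS₀eq : S₀ = Nᴴ * (F' * F') * N := by
    have h1 : S₀⁻¹ = N⁻¹ * (F * F) * (Nᴴ)⁻¹ := by
      rw [hFF, hD]
      refine (?_ : N⁻¹ * (N * S₀⁻¹ * Nᴴ) * Nᴴ⁻¹ = S₀⁻¹).symm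
      calc N⁻¹ * (N * S₀⁻¹ * Nᴴ) * Nᴴ⁻¹
          = (N⁻¹ * (N * (S₀⁻¹ * Nᴴ))) * Nᴴ⁻¹ := by rw [Matrix.mul_assoc N]
        _ = S₀⁻¹ * Nᴴ * Nᴴ⁻¹ := by rw [Matrix.nonsing_inv_mul_cancel_left _ _ hNdet]
        _ = S₀⁻¹ := Matrix.mul_nonsing_inv_cancel_right _ _ hNHdet
    have h2 : (F * F)⁻¹ = F' * F' := Matrix.inv_eq_right_inv hFF'
    calc S₀ = S₀⁻¹⁻¹ := (Matrix.nonsing_inv_nonsing_inv S₀ hS₀u).symm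
      _ = (N⁻¹ * (F * F) * (Nᴴ)⁻¹)⁻¹ := by rw [h1]
      _ = Nᴴ * (F' * F') * N := by
          rw [Matrix.mul_inv_rev, Matrix.mul_inv_rev, h2,
            Matrix.nonsing_inv_nonsing_inv _ hNHdet,
            Matrix.nonsing_inv_nonsing_inv _ hNdet, ← Matrix.mul_assoc]
  set L₀ : Matrix (Fin n) (Fin n) ℂ := F' * N with hL₀def
  have hF'herm : F'ᴴ = F' := by
    rw [hF'def, diagonal_conjTranspose]
    have : (star fun i => ((c i : ℂ))⁻¹) = fun i => ((c i : ℂ))⁻¹ := by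
      funext i
      simp [Complex.star_def, Complex.conj_ofReal]
    rw [this]
  have hL₀conj : L₀ᴴ * L₀ = S₀ := by
    rw [hL₀def, Matrix.conjTranspose_mul, hF'herm, hS₀eq,
      Matrix.mul_assoc, Matrix.mul_assoc, ← Matrix.mul_assoc F']
  have hL₀low : ∀ i j : Fin n, i < j → L₀ i j = 0 := by
    intro i j hij
    rw [hL₀def, hF'def, diagonal_mul, hNlow i j hij, mul_zero]
  have hL₀ii : ∀ i : Fin n, L₀ i i = (c i : ℂ)⁻¹ * N i i := by
    intro i; rw [hL₀def, hF'def, diagonal_mul]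
  have hL₀ne : ∀ i : Fin n, L₀ i i ≠ 0 := fun i => by
    rw [hL₀ii i]; exact mul_ne_zero (inv_ne_zero (hcne i)) (hNii i)
  set a : Fin n → ℂ := fun i => L₀ i i with hadef
  have hane : ∀ i, a i ≠ 0 := hL₀ne
  set w : Fin n → ℂ := fun i => star (a i) * ((‖a i‖ : ℂ))⁻¹ with hwdef
  have habs : ∀ i, (‖a i‖ : ℂ) ≠ 0 := fun i => by
    exact_mod_cast (norm_ne_zero_iff.mpr (hane i))
  have hr : ∀ i, ((‖a i‖ : ℂ)) * ((‖a i‖ : ℂ)) = a i * star (a i) := by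
    intro i
    rw [Complex.star_def, Complex.mul_conj, ← Complex.ofReal_mul, Complex.normSq_eq_norm_sq, sq]
  have hstarr : ∀ i, star ((‖a i‖ : ℂ)) = (‖a i‖ : ℂ) := fun i => by
    rw [Complex.star_def, Complex.conj_ofReal]
  have hw : ∀ i, star (w i) * w i = 1 := by
    intro i
    calc star (w i) * w i
        = (a i * star (a i)) * ((‖a i‖ : ℂ)⁻¹ * (‖a i‖ : ℂ)⁻¹) := by
          rw [hwdef, star_mul', star_star, star_inv₀, hstarr i]
          ring
      _ = ((‖a i‖ : ℂ) * (‖a i‖ : ℂ))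
            * ((‖a i‖ : ℂ)⁻¹ * (‖a i‖ : ℂ)⁻¹) := by rw [hr i]
      _ = 1 := by
          rw [mul_mul_mul_comm, mul_inv_cancel₀ (habs i), one_mul]
  set W : Matrix (Fin n) (Fin n) ℂ := diagonal w with hWdef
  refine ⟨W * L₀, ?_, ?_, ?_⟩
  · intro i j hij
    rw [hWdef, diagonal_mul, hL₀low i j hij, mul_zero]
  · intro i
    have : (W * L₀) i i = (‖a i‖ : ℂ) := by
      rw [hWdef, diagonal_mul]
      show w i * a i = _
      rw [hwdef]
      calc star (a i) * (‖a i‖ : ℂ)⁻¹ * a i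
          = (a i * star (a i)) * (‖a i‖ : ℂ)⁻¹ := by ring
        _ = (‖a i‖ : ℂ) := by
            rw [← hr i, mul_assoc, mul_inv_cancel₀ (habs i), mul_one]
    rw [this]
    constructor
    · simpa using norm_pos_iff.mpr (hane i)
    · simp
  · have hWW : Wᴴ * W = 1 := by
      rw [hWdef, diagonal_conjTranspose, diagonal_mul_diagonal]
      calc diagonal (star w * w) = diagonal (fun i => star (w i) * w i) := rfl
        _ = diagonal (fun _ => (1 : ℂ)) := by rw [funext hw]
        _ = 1 := diagonal_one
    rw [Matrix.conjTranspose_mul, Matrix.mul_assoc, ← Matrix.mul_assoc Wᴴ, hWW,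
      Matrix.one_mul, hL₀conj]

/-- The defining predicate of `iwaPair`. -/
def IwaPred (g : Matrix (Fin n) (Fin n) ℂ)
    (p : Matrix (Fin n) (Fin n) ℂ × Matrix (Fin n) (Fin n) ℂ) : Prop :=
  p.1ᴴ * p.1 = 1 ∧ (∀ i j : Fin n, i < j → p.2 i j = 0) ∧
    (∀ i : Fin n, 0 < (p.2 i i).re ∧ (p.2 i i).im = 0) ∧ g = p.1 * p.2⁻¹

lemma iwaPred_isUnit {g : Matrix (Fin n) (Fin n) ℂ}
    {p : Matrix (Fin n) (Fin n) ℂ × Matrix (Fin n) (Fin n) ℂ} (hp : IwaPred g p) :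
    IsUnit p.1 ∧ IsUnit p.2 ∧ IsUnit g := by
  obtain ⟨h1, h2, h3, h4⟩ := hp
  have hu2 : IsUnit p.2 := lower_isUnit h2 fun i => posC_ne (h3 i)
  exact ⟨unitary_isUnit h1, hu2,
    h4 ▸ ((unitary_isUnit h1).mul ((Matrix.isUnit_nonsing_inv_iff).mpr hu2))⟩

/-- a unitary lower triangular matrix with positive real diagonal entries is `1` -/
lemma unitary_lower_eq_one {U : Matrix (Fin n) (Fin n) ℂ} (h1 : Uᴴ * U = 1)
    (h2 : ∀ i j : Fin n, i < j → U i j = 0)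
    (h3 : ∀ i : Fin n, 0 < (U i i).re ∧ (U i i).im = 0) : U = 1 := by
  have hu : IsUnit U := unitary_isUnit h1
  have hcinv : Uᴴ = U⁻¹ := Matrix.inv_eq_left_inv h1 ▸ rfl
  have hoff : ∀ i j : Fin n, i ≠ j → U i j = 0 := by
    intro i j hij
    rcases lt_or_gt_of_ne hij with h | h
    · exact h2 i j h
    · have : Uᴴ j i = 0 := by
        rw [hcinv]; exact lower_inv h2 hu j i h
      have := congrArg star this
      rwa [Matrix.conjTranspose_apply, star_star, star_zero] at this
  ext i j
  rcases eq_or_ne i j with rfl | hij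
  · have hdiag : (Uᴴ * U) i i = star (U i i) * U i i := by
      rw [Matrix.mul_apply, Finset.sum_eq_single i]
      · rw [Matrix.conjTranspose_apply]
      · intro k _ hk
        rw [hoff k i hk, mul_zero]
      · simp
    rw [h1] at hdiag
    obtain ⟨r, hr, hre⟩ : ∃ r : ℝ, 0 < r ∧ U i i = (r : ℂ) := by
      refine ⟨(U i i).re, (h3 i).1, Complex.ext rfl ?_⟩
      simp [(h3 i).2]
    rw [hre] at hdiag ⊢
    rw [Matrix.one_apply_eq] at hdiag
    have : (r : ℂ) * r = 1 := by
      rw [Complex.star_def, Complex.conj_ofReal] at hdiag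
      exact hdiag.symm
    have hr1 : r = 1 := by
      have : r * r = 1 := by exact_mod_cast this
      nlinarith
    simp [hr1, Matrix.one_apply_eq]
  · rw [hoff i j hij, Matrix.one_apply_ne hij]

/-- uniqueness of the Iwasawa pair -/
lemma iwa_unique {g : Matrix (Fin n) (Fin n) ℂ}
    {p q : Matrix (Fin n) (Fin n) ℂ × Matrix (Fin n) (Fin n) ℂ}
    (hp : IwaPred g p) (hq : IwaPred g q) : p = q := by
  obtain ⟨hp1, hp2, hp3, hp4⟩ := hp
  obtain ⟨hq1, hq2, hq3, hq4⟩ := hq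
  have hup2 : IsUnit p.2 := lower_isUnit hp2 fun i => posC_ne (hp3 i)
  have huq2 : IsUnit q.2 := lower_isUnit hq2 fun i => posC_ne (hq3 i)
  have hdp : IsUnit p.2.det := (Matrix.isUnit_iff_isUnit_det _).mp hup2
  have hdq : IsUnit q.2.det := (Matrix.isUnit_iff_isUnit_det _).mp huq2
  set U := q.2⁻¹ * p.2 with hU
  have hkey : q.1ᴴ * p.1 = U := by
    have e1 : q.1ᴴ * g = q.2⁻¹ := by rw [hq4, ← Matrix.mul_assoc, hq1, Matrix.one_mul]
    have e2 : g * p.2 = p.1 := by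
      rw [hp4, Matrix.mul_assoc, Matrix.nonsing_inv_mul _ hdp, Matrix.mul_one]
    rw [hU, ← e2, ← Matrix.mul_assoc, e1]
  have hUlow : ∀ i j : Fin n, i < j → U i j = 0 := lower_mul (lower_inv hq2 huq2) hp2
  have hUdiag : ∀ i : Fin n, 0 < (U i i).re ∧ (U i i).im = 0 := by
    intro i
    rw [hU, lower_mul_diag (lower_inv hq2 huq2) hp2, lower_inv_diag hq2 huq2]
    exact posC_mul (posC_inv (hq3 i)) (hp3 i)
  have hUuni : Uᴴ * U = 1 := by
    rw [← hkey, Matrix.conjTranspose_mul, Matrix.conjTranspose_conjTranspose,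
      Matrix.mul_assoc, ← Matrix.mul_assoc q.1, mul_eq_one_comm.mp hq1,
      Matrix.one_mul, hp1]
  have hU1 : U = 1 := unitary_lower_eq_one hUuni hUlow hUdiag
  have h2 : p.2 = q.2 := by
    have := congrArg (fun M => q.2 * M) (hU1 ▸ hU)
    simpa [← Matrix.mul_assoc, Matrix.mul_nonsing_inv _ hdq] using this.symm
  have h1 : p.1 = q.1 := by
    have := congrArg (fun M => q.1 * M) ((hkey.trans hU1))
    simpa [← Matrix.mul_assoc, mul_eq_one_comm.mp hq1] using this.symm.symm
  exact Prod.ext h1 h2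

/-- existence of the Iwasawa pair for invertible matrices -/
lemma iwa_exists {g : Matrix (Fin n) (Fin n) ℂ} (hg : IsUnit g) :
    ∃ p : Matrix (Fin n) (Fin n) ℂ × Matrix (Fin n) (Fin n) ℂ, IwaPred g p := by
  obtain ⟨L, hLlow, hLpos, hLC⟩ := rev_cholesky hg
  have hLu : IsUnit L := lower_isUnit hLlow fun i => posC_ne (hLpos i)
  have hLdet : IsUnit L.det := (Matrix.isUnit_iff_isUnit_det _).mp hLu
  have hLHdet : IsUnit (Lᴴ).det := (Matrix.isUnit_iff_isUnit_det _).mp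
    ((Matrix.isUnit_conjTranspose L).mpr hLu)
  refine ⟨(g * L⁻¹, L⁻¹), ?_, ?_, ?_, ?_⟩
  · show (g * L⁻¹)ᴴ * (g * L⁻¹) = 1
    calc (g * L⁻¹)ᴴ * (g * L⁻¹)
        = L⁻¹ᴴ * (gᴴ * (g * L⁻¹)) := by
          rw [Matrix.conjTranspose_mul, Matrix.mul_assoc]
      _ = L⁻¹ᴴ * ((gᴴ * g) * L⁻¹) := by rw [Matrix.mul_assoc]
      _ = (Lᴴ)⁻¹ * (Lᴴ * L * L⁻¹) := by rw [hLC, Matrix.conjTranspose_nonsing_inv]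
      _ = (Lᴴ)⁻¹ * Lᴴ := by rw [Matrix.mul_nonsing_inv_cancel_right _ _ hLdet]
      _ = 1 := Matrix.nonsing_inv_mul _ hLHdet
  · exact lower_inv hLlow hLu
  · intro i
    show 0 < (L⁻¹ i i).re ∧ (L⁻¹ i i).im = 0
    rw [lower_inv_diag hLlow hLu]
    exact posC_inv (hLpos i)
  · show g = (g * L⁻¹) * (L⁻¹)⁻¹
    rw [Matrix.nonsing_inv_nonsing_inv _ hLdet,
      Matrix.nonsing_inv_mul_cancel_right _ _ hLdet]

lemma iwaPair_spec {g : Matrix (Fin n) (Fin n) ℂ}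
    (h : ∃ p : Matrix (Fin n) (Fin n) ℂ × Matrix (Fin n) (Fin n) ℂ, IwaPred g p) :
    IwaPred g (iwaPair g) := by
  unfold iwaPair
  split_ifs with hcond
  · exact hcond.choose_spec
  · exact absurd h hcond

lemma iwaPair_eq {g : Matrix (Fin n) (Fin n) ℂ}
    {p : Matrix (Fin n) (Fin n) ℂ × Matrix (Fin n) (Fin n) ℂ} (hp : IwaPred g p) :
    iwaPair g = p :=
  iwa_unique (iwaPair_spec ⟨p, hp⟩) hp

lemma dstar_eq {g : Matrix (Fin n) (Fin n) ℂ} (hg : IsUnit g)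
    (h : Matrix (Fin n) (Fin n) ℂ) :
    dstar g h = (iwaPair g).1 * h * ((iwaPair g).2)⁻¹ := rfl

end Aux

/-- The operation `g ∗ h = g₊ h g₋⁻¹` makes the invertible complex `n×n` matrices
into a group: it is closed, associative, has the identity matrix as two-sided
identity, and every element has a two-sided `∗`-inverse. -/
theorem stmt_7 (n : ℕ) :
    (∀ g h : Matrix (Fin n) (Fin n) ℂ, IsUnit g → IsUnit h → IsUnit (dstar g h)) ∧
    (∀ g h k : Matrix (Fin n) (Fin n) ℂ, IsUnit g → IsUnit h → IsUnit k →
        dstar (dstar g h) k = dstar g (dstar h k)) ∧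
    (∀ g : Matrix (Fin n) (Fin n) ℂ, IsUnit g → dstar g 1 = g ∧ dstar 1 g = g) ∧
    (∀ g : Matrix (Fin n) (Fin n) ℂ, IsUnit g →
        ∃ g' : Matrix (Fin n) (Fin n) ℂ, IsUnit g' ∧ dstar g g' = 1 ∧ dstar g' g = 1) := by
  have key : ∀ g : Matrix (Fin n) (Fin n) ℂ, IsUnit g → IwaPred g (iwaPair g) :=
    fun g hg => iwaPair_spec (iwa_exists hg)
  have hone : IwaPred (1 : Matrix (Fin n) (Fin n) ℂ) (1, 1) := by
    refine ⟨by simp, ?_, ?_, by simp⟩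
    · intro i j hij
      exact Matrix.one_apply_ne hij.ne
    · intro i
      show 0 < ((1 : Matrix (Fin n) (Fin n) ℂ) i i).re ∧ ((1 : Matrix (Fin n) (Fin n) ℂ) i i).im = 0
      rw [Matrix.one_apply_eq]
      norm_num
  -- the iwaPair of a product expression
  have pairmul : ∀ g h : Matrix (Fin n) (Fin n) ℂ, IsUnit g → IsUnit h →
      IwaPred (dstar g h) ((iwaPair g).1 * (iwaPair h).1, (iwaPair g).2 * (iwaPair h).2) := by
    intro g h hg hh
    obtain ⟨hg1, hg2, hg3, hg4⟩ := key g hg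
    obtain ⟨hh1, hh2, hh3, hh4⟩ := key h hh
    refine ⟨?_, lower_mul hg2 hh2, ?_, ?_⟩
    · rw [Matrix.conjTranspose_mul, Matrix.mul_assoc, ← Matrix.mul_assoc (iwaPair g).1ᴴ,
        hg1, Matrix.one_mul, hh1]
    · intro i
      show 0 < (((iwaPair g).2 * (iwaPair h).2) i i).re ∧
        (((iwaPair g).2 * (iwaPair h).2) i i).im = 0
      rw [lower_mul_diag hg2 hh2]
      exact posC_mul (hg3 i) (hh3 i)
    · set Qg := (iwaPair g).1
      set Mg := (iwaPair g).2
      set Qh := (iwaPair h).1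
      set Mh := (iwaPair h).2
      show Qg * h * Mg⁻¹ = Qg * Qh * (Mg * Mh)⁻¹
      rw [hh4, Matrix.mul_inv_rev]
      simp only [Matrix.mul_assoc]
  refine ⟨?_, ?_, ?_, ?_⟩
  · -- closure
    intro g h hg hh
    obtain ⟨hQ, hM, -⟩ := iwaPred_isUnit (key g hg)
    exact (hQ.mul hh).mul ((Matrix.isUnit_nonsing_inv_iff).mpr hM)
  · -- associativity
    intro g h k hg hh hk
    have hpair := iwaPair_eq (pairmul g h hg hh)
    show (iwaPair (dstar g h)).1 * k * ((iwaPair (dstar g h)).2)⁻¹ =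
      (iwaPair g).1 * ((iwaPair h).1 * k * ((iwaPair h).2)⁻¹) * ((iwaPair g).2)⁻¹
    rw [hpair]
    show (iwaPair g).1 * (iwaPair h).1 * k * ((iwaPair g).2 * (iwaPair h).2)⁻¹ =
      (iwaPair g).1 * ((iwaPair h).1 * k * ((iwaPair h).2)⁻¹) * ((iwaPair g).2)⁻¹
    rw [Matrix.mul_inv_rev]
    simp only [Matrix.mul_assoc]
  · -- identity
    intro g hg
    obtain ⟨hg1, hg2, hg3, hg4⟩ := key g hg
    constructor
    · show (iwaPair g).1 * 1 * ((iwaPair g).2)⁻¹ = g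
      rw [Matrix.mul_one, ← hg4]
    · show (iwaPair 1).1 * g * ((iwaPair 1).2)⁻¹ = g
      rw [iwaPair_eq hone]
      simp
  · -- inverses
    intro g hg
    obtain ⟨hg1, hg2, hg3, hg4⟩ := key g hg
    obtain ⟨hQu, hMu, -⟩ := iwaPred_isUnit (key g hg)
    have hMdet : IsUnit ((iwaPair g).2).det := (Matrix.isUnit_iff_isUnit_det _).mp hMu
    set Q := (iwaPair g).1 with hQdef
    set M := (iwaPair g).2 with hMdef
    have hg' : IwaPred (Qᴴ * M) (Qᴴ, M⁻¹) := by
      refine ⟨?_, lower_inv hg2 hMu, ?_, ?_⟩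
      · rw [Matrix.conjTranspose_conjTranspose]
        exact mul_eq_one_comm.mp hg1
      · intro i
        show 0 < (M⁻¹ i i).re ∧ (M⁻¹ i i).im = 0
        rw [lower_inv_diag hg2 hMu]
        exact posC_inv (hg3 i)
      · show Qᴴ * M = Qᴴ * (M⁻¹)⁻¹
        rw [Matrix.nonsing_inv_nonsing_inv _ hMdet]
    refine ⟨Qᴴ * M, (iwaPred_isUnit hg').2.2, ?_, ?_⟩
    · show Q * (Qᴴ * M) * M⁻¹ = 1
      rw [Matrix.mul_assoc, Matrix.mul_nonsing_inv_cancel_right _ _ hMdet]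
      exact mul_eq_one_comm.mp hg1
    · show (iwaPair (Qᴴ * M)).1 * g * ((iwaPair (Qᴴ * M)).2)⁻¹ = 1
      rw [iwaPair_eq hg']
      show Qᴴ * g * (M⁻¹)⁻¹ = 1
      rw [Matrix.nonsing_inv_nonsing_inv _ hMdet, hg4]
      show Qᴴ * (Q * M⁻¹) * M = 1
      rw [← Matrix.mul_assoc, hg1, Matrix.one_mul, Matrix.nonsing_inv_mul _ hMdet]
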